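/- Positivity of the Green-Naghdi rate of B: let V be a real symmetric positive definite 3×3 matrix and let c > 0 be such that V − c·𝟙 is positive semidefinite. Then for every symmetric 3×3 matrix D one has ⟨2 V D V, D⟩ ≥ 2 c² ‖D‖²; in particular ⟨2 V D V, D⟩ > 0 whenever D ≠ 0. -/

import Mathlib

open Matrix

lemma psd_trace_nonneg {n : ℕ} {A : Matrix (Fin n) (Fin n) ℝ} (hA : A.PosSemidef) :
    0 ≤ A.trace := by
  rw [Matrix.trace]
  apply Finset.sum_nonneg
  intro i _
  have := hA.dotProduct_mulVec_nonneg (Pi.single i 1)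
  simpa [dotProduct, Matrix.mulVec, Pi.single_apply, Finset.mul_sum] using this

lemma psd_trace_mul_nonneg {n : ℕ} {A B : Matrix (Fin n) (Fin n) ℝ}
    (hA : A.PosSemidef) (hB : B.PosSemidef) : 0 ≤ (A * B).trace := by
  obtain ⟨C, rfl⟩ : ∃ C : Matrix (Fin n) (Fin n) ℝ, B = Cᴴ * C := by
    open scoped MatrixOrder in exact CStarAlgebra.nonneg_iff_eq_star_mul_self.mp hB.nonneg
  have h1 : (A * (Cᴴ * C)).trace = (C * A * Cᴴ).trace := by
    rw [← Matrix.mul_assoc, Matrix.trace_mul_comm, Matrix.mul_assoc]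
  rw [h1]
  exact psd_trace_nonneg (hA.mul_mul_conjTranspose_same C)

lemma trace_self_mul_transpose_pos {n : ℕ} {D : Matrix (Fin n) (Fin n) ℝ} (hD : D ≠ 0) :
    0 < (D * Dᵀ).trace := by
  have hsum : (D * Dᵀ).trace = ∑ i, ∑ j, (D i j) ^ 2 := by
    simp [Matrix.trace, Matrix.mul_apply, Matrix.diag, sq]
  rw [hsum]
  obtain ⟨i, j, hij⟩ : ∃ i j, D i j ≠ 0 := by
    by_contra h
    push_neg at h
    exact hD (by ext i j; simp [h])
  have : (0:ℝ) < ∑ j, (D i j) ^ 2 := by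
    apply Finset.sum_pos' (fun k _ => sq_nonneg _)
    exact ⟨j, Finset.mem_univ j, by positivity⟩
  apply Finset.sum_pos' (fun k _ => Finset.sum_nonneg fun l _ => sq_nonneg _)
  exact ⟨i, Finset.mem_univ i, this⟩

theorem green_naghdi_positive
    (V : Matrix (Fin 3) (Fin 3) ℝ) (hV : V.PosDef) (c : ℝ) (hc : 0 < c)
    (hVc : (V - c • (1 : Matrix (Fin 3) (Fin 3) ℝ)).PosSemidef) :
    ∀ D : Matrix (Fin 3) (Fin 3) ℝ, Dᵀ = D →
      2 * c ^ 2 * ((D * Dᵀ).trace) ≤ (((2 : ℝ) • (V * D * V)) * Dᵀ).trace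
        ∧ (D ≠ 0 → 0 < (((2 : ℝ) • (V * D * V)) * Dᵀ).trace) := by
  intro D hDsym
  set S := V - c • (1 : Matrix (Fin 3) (Fin 3) ℝ) with hS
  have hDVD : (D * V * D).PosSemidef := by
    have := hV.posSemidef.mul_mul_conjTranspose_same D
    simpa [Matrix.conjTranspose_eq_transpose_of_trivial, hDsym] using this
  have hDD : (D * D).PosSemidef := by
    have := Matrix.posSemidef_self_mul_conjTranspose D
    simpa [Matrix.conjTranspose_eq_transpose_of_trivial, hDsym] using this
  -- step 1 : c * tr(D*D) ≤ tr(D*V*D)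
  have h1 : c * (D * D).trace ≤ (D * V * D).trace := by
    have h := psd_trace_mul_nonneg hVc hDD
    have e1 : (S * (D * D)).trace = (V * (D * D)).trace - c * (D * D).trace := by
      rw [hS, Matrix.sub_mul, Matrix.trace_sub, Matrix.smul_mul, Matrix.trace_smul,
        Matrix.one_mul, smul_eq_mul]
    have e2 : (V * (D * D)).trace = (D * V * D).trace := by
      rw [← Matrix.mul_assoc, Matrix.trace_mul_cycle V D D]
    linarith
  -- step 2 : c * tr(D*V*D) ≤ tr(V*D*V*D)
  have h2 : c * (D * V * D).trace ≤ (V * D * V * D).trace := by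
    have h := psd_trace_mul_nonneg hVc hDVD
    have e1 : (S * (D * V * D)).trace = (V * D * V * D).trace - c * (D * V * D).trace := by
      rw [hS, Matrix.sub_mul, Matrix.trace_sub, Matrix.smul_mul, Matrix.trace_smul,
        Matrix.one_mul, smul_eq_mul, ← Matrix.mul_assoc, ← Matrix.mul_assoc]
    linarith
  have key : c ^ 2 * (D * D).trace ≤ (V * D * V * D).trace := by
    nlinarith [psd_trace_nonneg hDD]
  have hrhs : (((2 : ℝ) • (V * D * V)) * Dᵀ).trace = 2 * (V * D * V * D).trace := by
    rw [hDsym, Matrix.smul_mul, Matrix.trace_smul, smul_eq_mul]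
  constructor
  · rw [hrhs, hDsym]; linarith
  · intro hD
    rw [hrhs]
    have hpos : 0 < (D * D).trace := by
      have := trace_self_mul_transpose_pos hD
      rwa [hDsym] at this
    have hc2 : 0 < c ^ 2 * (D * D).trace := by positivity
    linarith
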